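/- Let 𝒞 ⊂ ℝ^m be countable, δ-separated for some δ > 0 (i.e., ‖c − c̃‖ ≥ δ for all distinct c, c̃ ∈ 𝒞), and let π be a probability mass function on 𝒞 with H_{1/2} := 2 log Σ_{c∈𝒞} √(π(c)) < ∞. Let σ > 0, let φ be the density of N(0, σ²I_m), and for x ∈ ℝ^m define p_X(x) = Σ_u π(u)φ(x−u) and the posterior q_x(c) = π(c)φ(x−c)/p_X(x). Then ∫_{ℝ^m} p_X(x) · ( −Σ_{c∈𝒞} q_x(c) log q_x(c) ) dx ≤ 2 exp( H_{1/2} − δ²/(8σ²) ). -/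

import Mathlib

open MeasureTheory

/-- The density of the Gaussian distribution `N(0, σ² I_m)` on `ℝ^m`
(with `t = σ²` the variance). -/
noncomputable def gaussDensity (m : ℕ) (t : ℝ) (u : EuclideanSpace ℝ (Fin m)) : ℝ :=
  (2 * Real.pi * t) ^ (-(m : ℝ) / 2) * Real.exp (-‖u‖ ^ 2 / (2 * t))



lemma gaussDensity_pos {m : ℕ} {t : ℝ} (ht : 0 < t) (u : EuclideanSpace ℝ (Fin m)) :
    0 < gaussDensity m t u := by
  unfold gaussDensity
  have : (0:ℝ) < Real.pi := Real.pi_pos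
  positivity

lemma gaussDensity_le {m : ℕ} {t : ℝ} (ht : 0 < t) (u : EuclideanSpace ℝ (Fin m)) :
    gaussDensity m t u ≤ (2 * Real.pi * t) ^ (-(m : ℝ) / 2) := by
  unfold gaussDensity
  have h2 : Real.exp (-‖u‖ ^ 2 / (2 * t)) ≤ 1 := by
    rw [← Real.exp_zero]
    apply Real.exp_le_exp.2
    have : (0:ℝ) ≤ ‖u‖ ^ 2 := by positivity
    have h2t : (0:ℝ) < 2 * t := by linarith
    rw [div_le_iff₀ h2t]; nlinarith
  have hA : (0:ℝ) ≤ (2 * Real.pi * t) ^ (-(m : ℝ) / 2) := by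
    have : (0:ℝ) < Real.pi := Real.pi_pos
    positivity
  calc (2 * Real.pi * t) ^ (-(m : ℝ) / 2) * Real.exp (-‖u‖ ^ 2 / (2 * t))
      ≤ (2 * Real.pi * t) ^ (-(m : ℝ) / 2) * 1 := by
        exact mul_le_mul_of_nonneg_left h2 hA
    _ = _ := mul_one _

lemma sqrt_gaussDensity {m : ℕ} {t : ℝ} (ht : 0 < t) (u : EuclideanSpace ℝ (Fin m)) :
    Real.sqrt (gaussDensity m t u)
      = Real.sqrt ((2 * Real.pi * t) ^ (-(m : ℝ) / 2)) * Real.exp (-‖u‖ ^ 2 / (4 * t)) := by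
  unfold gaussDensity
  have : (0:ℝ) ≤ (2 * Real.pi * t) ^ (-(m : ℝ) / 2) := by
    have : (0:ℝ) < Real.pi := Real.pi_pos
    positivity
  rw [Real.sqrt_mul this, ← Real.exp_half]
  congr 1
  rw [div_div]
  ring_nf

lemma continuous_gaussDensity (m : ℕ) (t : ℝ) :
    Continuous (fun u : EuclideanSpace ℝ (Fin m) => gaussDensity m t u) := by
  unfold gaussDensity
  exact continuous_const.mul (Real.continuous_exp.comp
    (((continuous_norm.pow 2).neg).div_const _))

lemma integrable_gauss (m : ℕ) {b : ℝ} (hb : 0 < b) :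
    Integrable (fun x : EuclideanSpace ℝ (Fin m) => Real.exp (-b * ‖x‖ ^ 2)) := by
  have h := (GaussianFourier.integrable_cexp_neg_mul_sq_norm_add
    (V := EuclideanSpace ℝ (Fin m)) (b := (b : ℂ)) (by simpa using hb) 0 0).norm
  convert h using 2 with x
  simp [Complex.norm_exp]
  norm_cast
  exact Or.inl rfl


-- parallelogram identity step
lemma pair_norm_identity {m : ℕ} (a b x : EuclideanSpace ℝ (Fin m)) :
    ‖x - a‖ ^ 2 + ‖x - b‖ ^ 2
      = 2 * ‖x - (2:ℝ)⁻¹ • (a + b)‖ ^ 2 + ‖a - b‖ ^ 2 / 2 := by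
  have hpar := parallelogram_law_with_norm ℝ (x - a) (x - b)
  have hsum : (x - a) + (x - b) = (2:ℝ) • (x - (2:ℝ)⁻¹ • (a + b)) := by
    rw [smul_sub, smul_smul]
    norm_num
    rw [two_smul]
    abel
  have hdiff : (x - a) - (x - b) = b - a := by abel
  rw [hsum, hdiff] at hpar
  have h1 : ‖(2:ℝ) • (x - (2:ℝ)⁻¹ • (a + b))‖ = 2 * ‖x - (2:ℝ)⁻¹ • (a + b)‖ := by
    rw [norm_smul]; simp
  have h2 : ‖b - a‖ = ‖a - b‖ := norm_sub_rev _ _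
  rw [h1, h2] at hpar
  nlinarith [hpar]

lemma sqrt_gd' {m : ℕ} {t : ℝ} (ht : 0 < t) (u : EuclideanSpace ℝ (Fin m)) :
    Real.sqrt (gaussDensity m t u)
      = Real.sqrt ((2 * Real.pi * t) ^ (-(m : ℝ) / 2)) * Real.exp (-‖u‖ ^ 2 / (4 * t)) := by
  unfold gaussDensity
  have : (0:ℝ) ≤ (2 * Real.pi * t) ^ (-(m : ℝ) / 2) := by
    have : (0:ℝ) < Real.pi := Real.pi_pos
    positivity
  rw [Real.sqrt_mul this, ← Real.exp_half]
  congr 1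
  rw [div_div]
  ring_nf

lemma integrable_gauss' (m : ℕ) {b : ℝ} (hb : 0 < b) :
    Integrable (fun x : EuclideanSpace ℝ (Fin m) => Real.exp (-b * ‖x‖ ^ 2)) := by
  have h := (GaussianFourier.integrable_cexp_neg_mul_sq_norm_add
    (V := EuclideanSpace ℝ (Fin m)) (b := (b : ℂ)) (by simpa using hb) 0 0).norm
  convert h using 2 with x
  simp [Complex.norm_exp]
  norm_cast
  exact Or.inl rfl

lemma sqrt_pair_eq {m : ℕ} {t : ℝ} (ht : 0 < t) (a b : EuclideanSpace ℝ (Fin m)) (x) :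
    Real.sqrt (gaussDensity m t (x - a)) * Real.sqrt (gaussDensity m t (x - b))
      = ((2 * Real.pi * t) ^ (-(m : ℝ) / 2) * Real.exp (-‖a - b‖ ^ 2 / (8 * t)))
          * Real.exp (-(1 / (2 * t)) * ‖x - (2:ℝ)⁻¹ • (a + b)‖ ^ 2) := by
  rw [sqrt_gd' ht, sqrt_gd' ht]
  have hA : (0:ℝ) ≤ (2 * Real.pi * t) ^ (-(m : ℝ) / 2) := by
    have : (0:ℝ) < Real.pi := Real.pi_pos
    positivity
  have hAA : Real.sqrt ((2 * Real.pi * t) ^ (-(m : ℝ) / 2))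
      * Real.sqrt ((2 * Real.pi * t) ^ (-(m : ℝ) / 2)) = (2 * Real.pi * t) ^ (-(m : ℝ) / 2) :=
    Real.mul_self_sqrt hA
  have hexp : Real.exp (-‖x - a‖ ^ 2 / (4 * t)) * Real.exp (-‖x - b‖ ^ 2 / (4 * t))
      = Real.exp (-‖a - b‖ ^ 2 / (8 * t))
          * Real.exp (-(1 / (2 * t)) * ‖x - (2:ℝ)⁻¹ • (a + b)‖ ^ 2) := by
    rw [← Real.exp_add, ← Real.exp_add]
    congr 1
    have h := pair_norm_identity a b x
    rw [← add_div, ← neg_add, h]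
    generalize ‖x - (2:ℝ)⁻¹ • (a + b)‖ = n1
    generalize ‖a - b‖ = d
    field_simp
    ring
  calc Real.sqrt ((2 * Real.pi * t) ^ (-(m : ℝ) / 2)) * Real.exp (-‖x - a‖ ^ 2 / (4 * t)) *
        (Real.sqrt ((2 * Real.pi * t) ^ (-(m : ℝ) / 2)) * Real.exp (-‖x - b‖ ^ 2 / (4 * t)))
      = (Real.sqrt ((2 * Real.pi * t) ^ (-(m : ℝ) / 2)) * Real.sqrt ((2 * Real.pi * t) ^ (-(m : ℝ) / 2)))
        * (Real.exp (-‖x - a‖ ^ 2 / (4 * t)) * Real.exp (-‖x - b‖ ^ 2 / (4 * t))) := by ring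
    _ = _ := by rw [hAA, hexp]; ring

lemma integrable_sqrt_pair {m : ℕ} {t : ℝ} (ht : 0 < t) (a b : EuclideanSpace ℝ (Fin m)) :
    Integrable (fun x => Real.sqrt (gaussDensity m t (x - a))
      * Real.sqrt (gaussDensity m t (x - b))) := by
  have h1 : Integrable (fun x : EuclideanSpace ℝ (Fin m) =>
      Real.exp (-(1 / (2 * t)) * ‖x‖ ^ 2)) := integrable_gauss' m (by positivity)
  have h2 := (h1.comp_sub_right ((2:ℝ)⁻¹ • (a + b))).const_mul
      ((2 * Real.pi * t) ^ (-(m : ℝ) / 2) * Real.exp (-‖a - b‖ ^ 2 / (8 * t)))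
  refine h2.congr (Filter.Eventually.of_forall fun x => ?_)
  exact (sqrt_pair_eq ht a b x).symm

lemma integral_sqrt_pair {m : ℕ} {t : ℝ} (ht : 0 < t) (a b : EuclideanSpace ℝ (Fin m)) :
    ∫ x, Real.sqrt (gaussDensity m t (x - a)) * Real.sqrt (gaussDensity m t (x - b))
      = Real.exp (-‖a - b‖ ^ 2 / (8 * t)) := by
  have hπ : (0:ℝ) < Real.pi := Real.pi_pos
  have hb : (0:ℝ) < 1 / (2 * t) := by positivity
  have hint : ∫ x : EuclideanSpace ℝ (Fin m), Real.exp (-(1 / (2 * t)) * ‖x - (2:ℝ)⁻¹ • (a + b)‖ ^ 2)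
      = (2 * Real.pi * t) ^ ((m : ℝ) / 2) := by
    rw [integral_sub_right_eq_self (fun x : EuclideanSpace ℝ (Fin m) =>
      Real.exp (-(1 / (2 * t)) * ‖x‖ ^ 2)) ((2:ℝ)⁻¹ • (a + b))]
    rw [GaussianFourier.integral_rexp_neg_mul_sq_norm hb]
    rw [finrank_euclideanSpace_fin]
    congr 1
    field_simp
  calc ∫ x, Real.sqrt (gaussDensity m t (x - a)) * Real.sqrt (gaussDensity m t (x - b))
      = ∫ x, ((2 * Real.pi * t) ^ (-(m : ℝ) / 2) * Real.exp (-‖a - b‖ ^ 2 / (8 * t)))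
          * Real.exp (-(1 / (2 * t)) * ‖x - (2:ℝ)⁻¹ • (a + b)‖ ^ 2) := by
        congr 1; funext x; rw [sqrt_pair_eq ht]
    _ = ((2 * Real.pi * t) ^ (-(m : ℝ) / 2) * Real.exp (-‖a - b‖ ^ 2 / (8 * t)))
          * ((2 * Real.pi * t) ^ ((m : ℝ) / 2)) := by rw [integral_const_mul, hint]
    _ = Real.exp (-‖a - b‖ ^ 2 / (8 * t)) := by
        rw [mul_comm ((2 * Real.pi * t) ^ (-(m : ℝ) / 2)) _, mul_assoc,
          ← Real.rpow_add (by positivity)]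
        rw [show -((m:ℝ))/2 + (m:ℝ)/2 = 0 by ring, Real.rpow_zero, mul_one]


lemma sqrt_tsum_le {ι : Type*} (f : ι → ℝ) (hf0 : ∀ i, 0 ≤ f i) (hf : Summable f)
    (hsf : Summable fun i => Real.sqrt (f i)) :
    Real.sqrt (∑' i, f i) ≤ ∑' i, Real.sqrt (f i) := by
  have hT : ∀ i, Real.sqrt (f i) ≤ ∑' j, Real.sqrt (f j) :=
    fun i => Summable.le_tsum hsf i fun j _ => Real.sqrt_nonneg _
  have h1 : ∑' i, f i ≤ (∑' i, Real.sqrt (f i)) ^ 2 := by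
    have hle : ∀ i, f i ≤ Real.sqrt (f i) * ∑' j, Real.sqrt (f j) := by
      intro i
      nth_rewrite 1 [← Real.sq_sqrt (hf0 i)]
      rw [sq]
      exact mul_le_mul_of_nonneg_left (hT i) (Real.sqrt_nonneg _)
    calc ∑' i, f i ≤ ∑' i, Real.sqrt (f i) * ∑' j, Real.sqrt (f j) :=
          Summable.tsum_le_tsum hle hf (hsf.mul_right _)
      _ = (∑' i, Real.sqrt (f i)) ^ 2 := by rw [tsum_mul_right, sq]
  calc Real.sqrt (∑' i, f i) ≤ Real.sqrt ((∑' i, Real.sqrt (f i)) ^ 2) := Real.sqrt_le_sqrt h1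
    _ = ∑' i, Real.sqrt (f i) := Real.sqrt_sq (tsum_nonneg fun i => Real.sqrt_nonneg _)

lemma neg_mul_log_le {a S : ℝ} (h0 : 0 ≤ a) (hS : a ≤ S) :
    -(a * Real.log (a / S)) ≤ 2 * (Real.sqrt a * Real.sqrt (S - a)) := by
  rcases eq_or_lt_of_le h0 with h | h
  · simp [← h]
  have hS0 : 0 < S := lt_of_lt_of_le h hS
  have hsq : Real.sqrt a * Real.sqrt a = a := Real.mul_self_sqrt h0
  have hsqS : Real.sqrt S * Real.sqrt S = S := Real.mul_self_sqrt hS0.le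
  have h1 : Real.log (S / a) ≤ 2 * (Real.sqrt (S / a) - 1) := by
    have h2 : Real.log (Real.sqrt (S / a)) ≤ Real.sqrt (S / a) - 1 :=
      Real.log_le_sub_one_of_pos (Real.sqrt_pos.mpr (by positivity))
    have h3 : Real.log (Real.sqrt (S / a)) = Real.log (S / a) / 2 :=
      Real.log_sqrt (by positivity)
    linarith
  have hlog : -(a * Real.log (a / S)) = a * Real.log (S / a) := by
    rw [show Real.log (a / S) = -Real.log (S / a) by rw [← Real.log_inv, inv_div]]
    ring
  have h4 : a * Real.sqrt (S / a) = Real.sqrt a * Real.sqrt S := by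
    rw [Real.sqrt_div hS0.le, show a * (Real.sqrt S / Real.sqrt a) = a / Real.sqrt a * Real.sqrt S
      from by ring, Real.div_sqrt]
  have h5 : Real.sqrt S ≤ Real.sqrt a + Real.sqrt (S - a) := by
    have hle : S ≤ (Real.sqrt a + Real.sqrt (S - a)) ^ 2 := by
      have e1 : Real.sqrt (S - a) * Real.sqrt (S - a) = S - a :=
        Real.mul_self_sqrt (by linarith)
      nlinarith [Real.sqrt_nonneg a, Real.sqrt_nonneg (S - a)]
    calc Real.sqrt S ≤ Real.sqrt ((Real.sqrt a + Real.sqrt (S - a)) ^ 2) := Real.sqrt_le_sqrt hle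
      _ = Real.sqrt a + Real.sqrt (S - a) := Real.sqrt_sq (by positivity)
  rw [hlog]
  have h6 : a * Real.log (S / a) ≤ a * (2 * (Real.sqrt (S / a) - 1)) :=
    mul_le_mul_of_nonneg_left h1 h0
  have h7 : Real.sqrt a * Real.sqrt S ≤ Real.sqrt a * (Real.sqrt a + Real.sqrt (S - a)) :=
    mul_le_mul_of_nonneg_left h5 (Real.sqrt_nonneg a)
  nlinarith [h6, h7, h4, hsq]

set_option maxHeartbeats 1000000 in
lemma core_pointwise {ι : Type*} [DecidableEq ι] (a : ι → ℝ) (h0 : ∀ i, 0 ≤ a i) (ha : Summable a)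
    (hsa : Summable fun i => Real.sqrt (a i)) :
    (∑' i, a i) * (-∑' i, (a i / ∑' j, a j) * Real.log (a i / ∑' j, a j))
      ≤ 2 * ∑' p : ι × ι,
          (if p.1 = p.2 then 0 else Real.sqrt (a p.1) * Real.sqrt (a p.2)) := by
  set S := ∑' i, a i with hSdef
  set T := ∑' i, Real.sqrt (a i) with hTdef
  have hT0 : ∀ i, Real.sqrt (a i) ≤ T := fun i => Summable.le_tsum hsa i fun j _ => Real.sqrt_nonneg _
  have haS : ∀ i, a i ≤ S := fun i => Summable.le_tsum ha i fun j _ => h0 j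
  have hS0 : 0 ≤ S := tsum_nonneg h0
  -- per-index bound
  have key : ∀ i, S * -((a i / S) * Real.log (a i / S))
      ≤ 2 * (Real.sqrt (a i) * (T - Real.sqrt (a i))) := by
    intro i
    have hTi : 0 ≤ T - Real.sqrt (a i) := by linarith [hT0 i]
    rcases eq_or_lt_of_le hS0 with hS | hS
    · have hai : a i = 0 := le_antisymm (by rw [hS]; exact haS i) (h0 i)
      simp [← hS, hai]
    · have heq : S * -((a i / S) * Real.log (a i / S)) = -(a i * Real.log (a i / S)) := by
        field_simp
      rw [heq]
      refine le_trans (neg_mul_log_le (h0 i) (haS i)) ?_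
      have hsub : Real.sqrt (S - a i) ≤ T - Real.sqrt (a i) := by
        have hplus : S = a i + ∑' j, if j = i then 0 else a j := Summable.tsum_eq_add_tsum_ite ha i
        have hplus' : T = Real.sqrt (a i) + ∑' j, if j = i then 0 else Real.sqrt (a j) :=
          Summable.tsum_eq_add_tsum_ite hsa i
        have hsum1 : Summable fun j => if j = i then 0 else a j :=
          Summable.of_nonneg_of_le (fun j => by split <;> simp [h0 j])
            (fun j => by split <;> simp [h0 j]) ha
        have hsum2 : Summable fun j => Real.sqrt (if j = i then 0 else a j) :=
          Summable.of_nonneg_of_le (fun j => Real.sqrt_nonneg _)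
            (fun j => by split <;> simp [Real.sqrt_nonneg]) hsa
        have h1 : S - a i = ∑' j, if j = i then 0 else a j := by
          rw [hplus]; ring
        have h2 : Real.sqrt (S - a i) ≤ ∑' j, Real.sqrt (if j = i then 0 else a j) := by
          rw [h1]
          exact sqrt_tsum_le _ (fun j => by split <;> simp [h0 j]) hsum1 hsum2
        have h3 : (∑' j, Real.sqrt (if j = i then 0 else a j))
            = ∑' j, (if j = i then 0 else Real.sqrt (a j)) := by
          congr 1; funext j; split <;> simp
        have h4 : (∑' j, (if j = i then 0 else Real.sqrt (a j))) = T - Real.sqrt (a i) := by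
          rw [hplus']; ring
        rw [h3, h4] at h2
        exact h2
      have := mul_le_mul_of_nonneg_left hsub (Real.sqrt_nonneg (a i))
      linarith
  -- summability facts
  have hrhs_sum : Summable fun i => 2 * (Real.sqrt (a i) * (T - Real.sqrt (a i))) := by
    apply Summable.mul_left
    have h1 : Summable fun i => Real.sqrt (a i) * T := hsa.mul_right _
    have h2 : Summable fun i => Real.sqrt (a i) * Real.sqrt (a i) :=
      Summable.of_nonneg_of_le (fun i => by positivity)
        (fun i => mul_le_mul_of_nonneg_left (hT0 i) (Real.sqrt_nonneg _)) h1
    simpa [mul_sub] using h1.sub h2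
  have hlhs_nonneg : ∀ i, 0 ≤ S * -((a i / S) * Real.log (a i / S)) := by
    intro i
    rcases eq_or_lt_of_le hS0 with hS | hS
    · rw [← hS]; simp
    · apply mul_nonneg hS0
      rw [neg_nonneg]
      apply mul_nonpos_of_nonneg_of_nonpos
      · exact div_nonneg (h0 i) hS0
      · apply Real.log_nonpos (div_nonneg (h0 i) hS0)
        rw [div_le_one hS]
        exact haS i
  have hlhs_sum : Summable fun i => S * -((a i / S) * Real.log (a i / S)) :=
    Summable.of_nonneg_of_le hlhs_nonneg key hrhs_sum
  -- pair summability
  have hBsum : Summable fun p : ι × ι => Real.sqrt (a p.1) * Real.sqrt (a p.2) :=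
    hsa.mul_of_nonneg hsa (fun i => Real.sqrt_nonneg _) fun i => Real.sqrt_nonneg _
  have hB'sum : Summable fun p : ι × ι =>
      (if p.1 = p.2 then 0 else Real.sqrt (a p.1) * Real.sqrt (a p.2)) :=
    Summable.of_nonneg_of_le (fun p => by split <;> positivity)
      (fun p => by split
                   · positivity
                   · exact le_rfl) hBsum
  -- assemble
  calc S * (-∑' i, (a i / S) * Real.log (a i / S))
      = ∑' i, S * -((a i / S) * Real.log (a i / S)) := by
        rw [← tsum_neg, tsum_mul_left]
    _ ≤ ∑' i, 2 * (Real.sqrt (a i) * (T - Real.sqrt (a i))) :=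
        Summable.tsum_le_tsum key hlhs_sum hrhs_sum
    _ = 2 * ∑' i, Real.sqrt (a i) * (T - Real.sqrt (a i)) := tsum_mul_left
    _ = 2 * ∑' p : ι × ι, (if p.1 = p.2 then 0 else Real.sqrt (a p.1) * Real.sqrt (a p.2)) := by
        congr 1
        rw [Summable.tsum_prod hB'sum]
        congr 1
        funext i
        have h1 : ∀ j, (if i = j then 0 else Real.sqrt (a i) * Real.sqrt (a j))
            = Real.sqrt (a i) * (if j = i then 0 else Real.sqrt (a j)) := by
          intro j
          by_cases h : i = j
          · simp [h]
          · rw [if_neg h, if_neg (Ne.symm h)]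
        calc Real.sqrt (a i) * (T - Real.sqrt (a i))
            = Real.sqrt (a i) * ∑' j, (if j = i then 0 else Real.sqrt (a j)) := by
              rw [show (∑' j, (if j = i then 0 else Real.sqrt (a j))) = T - Real.sqrt (a i) from
                by rw [hTdef, Summable.tsum_eq_add_tsum_ite hsa i]; ring]
          _ = ∑' j, Real.sqrt (a i) * (if j = i then 0 else Real.sqrt (a j)) := by
              rw [tsum_mul_left]
          _ = ∑' j, (if i = j then 0 else Real.sqrt (a i) * Real.sqrt (a j)) := by
              congr 1; funext j; rw [h1 j]

set_option maxHeartbeats 1000000 in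
/-- conditional entropy under δ-separation: for a countable
`δ`-separated codebook `{c i} ⊂ ℝ^m` with pmf `π` of finite order-1/2 Rényi entropy
`H_{1/2}`, observed through the Gaussian channel with noise `N(0, σ² I_m)`, the
conditional Shannon entropy satisfies
`∫ p_X(x) (−Σ_c q_x(c) log q_x(c)) dx ≤ 2 exp(H_{1/2} − δ²/(8σ²))`. -/
theorem stmt17 (m : ℕ) {ι : Type*} [Countable ι]
    (c : ι → EuclideanSpace ℝ (Fin m))
    (δ : ℝ) (hδ : 0 < δ) (hsep : ∀ i j : ι, i ≠ j → δ ≤ ‖c i - c j‖)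
    (π : ι → ℝ) (hπ0 : ∀ i, 0 ≤ π i) (hπ1 : ∑' i, π i = 1)
    (hsqrt : Summable fun i => Real.sqrt (π i))
    (Hhalf : ℝ) (hHhalf : Hhalf = 2 * Real.log (∑' i, Real.sqrt (π i)))
    (σ : ℝ) (hσ : 0 < σ)
    (pX : EuclideanSpace ℝ (Fin m) → ℝ)
    (hpX : pX = fun x => ∑' u, π u * gaussDensity m (σ ^ 2) (x - c u))
    (q : EuclideanSpace ℝ (Fin m) → ι → ℝ)
    (hq : q = fun x i => π i * gaussDensity m (σ ^ 2) (x - c i) / pX x) :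
    ∫ x : EuclideanSpace ℝ (Fin m),
        pX x * (-∑' i, q x i * Real.log (q x i))
      ≤ 2 * Real.exp (Hhalf - δ ^ 2 / (8 * σ ^ 2)) := by
  classical
  set t := σ ^ 2 with htdef
  have ht : 0 < t := by positivity
  have hπsum : Summable π := by
    by_contra h
    rw [tsum_eq_zero_of_not_summable h] at hπ1
    norm_num at hπ1
  set A := (2 * Real.pi * t) ^ (-(m : ℝ) / 2) with hAdef
  have hA0 : (0:ℝ) < A := by
    have := Real.pi_pos
    positivity
  -- basic facts about the per-point weights
  have ha0 : ∀ (x : EuclideanSpace ℝ (Fin m)) i, 0 ≤ π i * gaussDensity m t (x - c i) :=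
    fun x i => mul_nonneg (hπ0 i) (gaussDensity_pos ht _).le
  have hale : ∀ (x : EuclideanSpace ℝ (Fin m)) i, π i * gaussDensity m t (x - c i) ≤ π i * A :=
    fun x i => mul_le_mul_of_nonneg_left (gaussDensity_le ht _) (hπ0 i)
  have hasum : ∀ x : EuclideanSpace ℝ (Fin m),
      Summable fun i => π i * gaussDensity m t (x - c i) :=
    fun x => Summable.of_nonneg_of_le (ha0 x) (hale x) (hπsum.mul_right A)
  have hterm_le : ∀ (x : EuclideanSpace ℝ (Fin m)) i,
      Real.sqrt (π i * gaussDensity m t (x - c i)) ≤ Real.sqrt (π i) * Real.sqrt A := by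
    intro x i
    rw [Real.sqrt_mul (hπ0 i)]
    exact mul_le_mul_of_nonneg_left (Real.sqrt_le_sqrt (gaussDensity_le ht _))
      (Real.sqrt_nonneg _)
  have hu : Summable fun i => Real.sqrt (π i) * Real.sqrt A := hsqrt.mul_right _
  have hsa : ∀ x : EuclideanSpace ℝ (Fin m),
      Summable fun i => Real.sqrt (π i * gaussDensity m t (x - c i)) :=
    fun x => Summable.of_nonneg_of_le (fun i => Real.sqrt_nonneg _) (hterm_le x) hu
  obtain ⟨i0, hi0⟩ : ∃ i, 0 < π i := by
    by_contra h
    push_neg at h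
    have hz : ∀ i, π i = 0 := fun i => le_antisymm (h i) (hπ0 i)
    rw [funext hz] at hπ1
    simp at hπ1
  have hpXpos : ∀ x, 0 < pX x := by
    intro x
    rw [hpX]
    have h1 : π i0 * gaussDensity m t (x - c i0) ≤ ∑' u, π u * gaussDensity m t (x - c u) :=
      Summable.le_tsum (hasum x) i0 fun j _ => ha0 x j
    have h2 : 0 < π i0 * gaussDensity m t (x - c i0) :=
      mul_pos hi0 (gaussDensity_pos ht _)
    exact lt_of_lt_of_le h2 h1
  have hq01 : ∀ x i, 0 ≤ q x i ∧ q x i ≤ 1 := by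
    intro x i
    rw [hq]
    constructor
    · exact div_nonneg (ha0 x i) (hpXpos x).le
    · rw [div_le_one (hpXpos x)]
      rw [hpX]
      exact Summable.le_tsum (hasum x) i fun j _ => ha0 x j
  have hfnn : ∀ x, 0 ≤ pX x * (-∑' i, q x i * Real.log (q x i)) := by
    intro x
    apply mul_nonneg (hpXpos x).le
    rw [neg_nonneg]
    apply tsum_nonpos
    intro i
    exact mul_nonpos_of_nonneg_of_nonpos (hq01 x i).1
      (Real.log_nonpos (hq01 x i).1 (hq01 x i).2)
  -- the pointwise bound
  set F : ι × ι → EuclideanSpace ℝ (Fin m) → ℝ := fun p x =>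
    if p.1 = p.2 then 0 else Real.sqrt (π p.1 * gaussDensity m t (x - c p.1))
      * Real.sqrt (π p.2 * gaussDensity m t (x - c p.2)) with hF
  have hpoint : ∀ x, pX x * (-∑' i, q x i * Real.log (q x i)) ≤ 2 * ∑' p : ι × ι, F p x := by
    intro x
    simp only [hq, hpX, hF]
    exact core_pointwise (fun i => π i * gaussDensity m t (x - c i)) (ha0 x) (hasum x) (hsa x)
  have hF0 : ∀ p x, 0 ≤ F p x := by
    intro p x
    simp only [hF]
    split
    · exact le_rfl
    · positivity
  have hFle : ∀ p x, F p x ≤ (Real.sqrt (π p.1) * Real.sqrt A)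
      * (Real.sqrt (π p.2) * Real.sqrt A) := by
    intro p x
    simp only [hF]
    split
    · positivity
    · exact mul_le_mul (hterm_le x p.1) (hterm_le x p.2) (Real.sqrt_nonneg _)
        (by positivity)
  have huu : Summable fun p : ι × ι =>
      (Real.sqrt (π p.1) * Real.sqrt A) * (Real.sqrt (π p.2) * Real.sqrt A) :=
    hu.mul_of_nonneg hu (fun i => by positivity) (fun i => by positivity)
  have hFsumx : ∀ x, Summable fun p : ι × ι => F p x :=
    fun x => Summable.of_nonneg_of_le (fun p => hF0 p x) (fun p => hFle p x) huu
  have hFcont : ∀ p : ι × ι, Continuous (F p) := by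
    intro p
    by_cases h : p.1 = p.2
    · simp only [hF, if_pos h]
      exact continuous_const
    · simp only [hF, if_neg h]
      have hc : ∀ i : ι, Continuous fun x : EuclideanSpace ℝ (Fin m) =>
          Real.sqrt (π i * gaussDensity m t (x - c i)) :=
        fun i => Real.continuous_sqrt.comp (continuous_const.mul
          ((continuous_gaussDensity m t).comp (continuous_id.sub continuous_const)))
      exact (hc p.1).mul (hc p.2)
  have hsplit : ∀ (i j : ι) (x : EuclideanSpace ℝ (Fin m)),
      Real.sqrt (π i * gaussDensity m t (x - c i)) * Real.sqrt (π j * gaussDensity m t (x - c j))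
        = (Real.sqrt (π i) * Real.sqrt (π j))
          * (Real.sqrt (gaussDensity m t (x - c i)) * Real.sqrt (gaussDensity m t (x - c j))) := by
    intro i j x
    rw [Real.sqrt_mul (hπ0 i), Real.sqrt_mul (hπ0 j)]
    ring
  have hFint : ∀ p : ι × ι, Integrable (F p) := by
    intro p
    by_cases h : p.1 = p.2
    · simp only [hF, if_pos h]
      exact integrable_zero _ _ _
    · simp only [hF, if_neg h]
      have h2 := (integrable_sqrt_pair ht (c p.1) (c p.2)).const_mul
        (Real.sqrt (π p.1) * Real.sqrt (π p.2))
      exact h2.congr (Filter.Eventually.of_forall fun x => (hsplit p.1 p.2 x).symm)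
  have hterm : ∀ p : ι × ι, ∫⁻ x, ENNReal.ofReal (F p x)
      ≤ ENNReal.ofReal (Real.sqrt (π p.1)) * ENNReal.ofReal (Real.sqrt (π p.2))
        * ENNReal.ofReal (Real.exp (-δ ^ 2 / (8 * t))) := by
    intro p
    by_cases h : p.1 = p.2
    · have hz : ∀ x : EuclideanSpace ℝ (Fin m), ENNReal.ofReal (F p x) = 0 := by
        intro x; simp only [hF, if_pos h, ENNReal.ofReal_zero]
      simp only [hz, lintegral_zero]
      exact zero_le
    · rw [← ofReal_integral_eq_lintegral_ofReal (hFint p)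
        (Filter.Eventually.of_forall fun x => hF0 p x)]
      have hint : ∫ x, F p x = (Real.sqrt (π p.1) * Real.sqrt (π p.2))
          * Real.exp (-‖c p.1 - c p.2‖ ^ 2 / (8 * t)) := by
        have : (fun x => F p x) = fun x => (Real.sqrt (π p.1) * Real.sqrt (π p.2))
            * (Real.sqrt (gaussDensity m t (x - c p.1))
              * Real.sqrt (gaussDensity m t (x - c p.2))) := by
          funext x
          simp only [hF, if_neg h]
          exact hsplit p.1 p.2 x
        rw [this, integral_const_mul, integral_sqrt_pair ht]
      have hd : δ ^ 2 ≤ ‖c p.1 - c p.2‖ ^ 2 := by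
        have h1 := hsep p.1 p.2 h
        nlinarith [hδ]
      have hexp : Real.exp (-‖c p.1 - c p.2‖ ^ 2 / (8 * t)) ≤ Real.exp (-δ ^ 2 / (8 * t)) := by
        apply Real.exp_le_exp.2
        rw [neg_div, neg_div, neg_le_neg_iff]
        gcongr
      rw [hint]
      calc ENNReal.ofReal ((Real.sqrt (π p.1) * Real.sqrt (π p.2))
              * Real.exp (-‖c p.1 - c p.2‖ ^ 2 / (8 * t)))
          ≤ ENNReal.ofReal ((Real.sqrt (π p.1) * Real.sqrt (π p.2))
              * Real.exp (-δ ^ 2 / (8 * t))) :=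
            ENNReal.ofReal_le_ofReal (mul_le_mul_of_nonneg_left hexp (by positivity))
        _ = _ := by
            rw [ENNReal.ofReal_mul (by positivity), ENNReal.ofReal_mul (by positivity)]
  set Tπ := ∑' i, Real.sqrt (π i) with hTπ
  have hTπpos : 0 < Tπ :=
    lt_of_lt_of_le (Real.sqrt_pos.mpr hi0) (Summable.le_tsum hsqrt i0 fun j _ => Real.sqrt_nonneg _)
  have hmeas : ∀ p : ι × ι, AEMeasurable (fun x => ENNReal.ofReal (F p x)) volume :=
    fun p => (ENNReal.continuous_ofReal.comp (hFcont p)).aemeasurable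
  have hRHSeq : 2 * Real.exp (Hhalf - δ ^ 2 / (8 * t))
      = 2 * (Tπ * Tπ * Real.exp (-δ ^ 2 / (8 * t))) := by
    rw [hHhalf, sub_eq_add_neg, Real.exp_add,
      show (2:ℝ) * Real.log Tπ = Real.log Tπ + Real.log Tπ from two_mul _,
      Real.exp_add, Real.exp_log hTπpos, ← neg_div]
  have hlin : ∫⁻ x, ENNReal.ofReal (pX x * (-∑' i, q x i * Real.log (q x i)))
      ≤ ENNReal.ofReal (2 * Real.exp (Hhalf - δ ^ 2 / (8 * t))) := by
    calc ∫⁻ x, ENNReal.ofReal (pX x * (-∑' i, q x i * Real.log (q x i)))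
        ≤ ∫⁻ x, ENNReal.ofReal (2 * ∑' p : ι × ι, F p x) :=
          lintegral_mono fun x => ENNReal.ofReal_le_ofReal (hpoint x)
      _ = ∫⁻ x, ENNReal.ofReal 2 * ∑' p : ι × ι, ENNReal.ofReal (F p x) := by
          apply lintegral_congr
          intro x
          rw [ENNReal.ofReal_mul (by norm_num),
            ENNReal.ofReal_tsum_of_nonneg (fun p => hF0 p x) (hFsumx x)]
      _ = ENNReal.ofReal 2 * ∑' p : ι × ι, ∫⁻ x, ENNReal.ofReal (F p x) := by
          rw [lintegral_const_mul' _ _ ENNReal.ofReal_ne_top, lintegral_tsum hmeas]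
      _ ≤ ENNReal.ofReal 2 * ∑' p : ι × ι,
            (ENNReal.ofReal (Real.sqrt (π p.1)) * ENNReal.ofReal (Real.sqrt (π p.2))
              * ENNReal.ofReal (Real.exp (-δ ^ 2 / (8 * t)))) :=
          mul_le_mul_right (ENNReal.tsum_le_tsum hterm) _
      _ = ENNReal.ofReal 2 * (ENNReal.ofReal Tπ * ENNReal.ofReal Tπ
            * ENNReal.ofReal (Real.exp (-δ ^ 2 / (8 * t)))) := by
          rw [ENNReal.tsum_mul_right, ENNReal.tsum_prod']
          congr 2
          calc ∑' (i : ι), ∑' (j : ι),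
                ENNReal.ofReal (Real.sqrt (π i)) * ENNReal.ofReal (Real.sqrt (π j))
              = ∑' (i : ι), ENNReal.ofReal (Real.sqrt (π i))
                  * ∑' (j : ι), ENNReal.ofReal (Real.sqrt (π j)) := by
                congr 1; funext i; rw [ENNReal.tsum_mul_left]
            _ = (∑' (i : ι), ENNReal.ofReal (Real.sqrt (π i)))
                  * ∑' (j : ι), ENNReal.ofReal (Real.sqrt (π j)) := ENNReal.tsum_mul_right
            _ = ENNReal.ofReal Tπ * ENNReal.ofReal Tπ := by
                rw [← ENNReal.ofReal_tsum_of_nonneg (fun i => Real.sqrt_nonneg _) hsqrt]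
      _ = ENNReal.ofReal (2 * (Tπ * Tπ * Real.exp (-δ ^ 2 / (8 * t)))) := by
          rw [ENNReal.ofReal_mul (by norm_num : (0:ℝ) ≤ 2),
            ENNReal.ofReal_mul (by positivity), ENNReal.ofReal_mul (by positivity)]
      _ = ENNReal.ofReal (2 * Real.exp (Hhalf - δ ^ 2 / (8 * t))) := by rw [hRHSeq]
  by_cases hInt : Integrable (fun x => pX x * (-∑' i, q x i * Real.log (q x i))) volume
  · rw [integral_eq_lintegral_of_nonneg_ae (Filter.Eventually.of_forall hfnn)
      hInt.aestronglyMeasurable]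
    calc (∫⁻ x, ENNReal.ofReal (pX x * (-∑' i, q x i * Real.log (q x i)))).toReal
        ≤ (ENNReal.ofReal (2 * Real.exp (Hhalf - δ ^ 2 / (8 * t)))).toReal :=
          ENNReal.toReal_mono ENNReal.ofReal_ne_top hlin
      _ = 2 * Real.exp (Hhalf - δ ^ 2 / (8 * t)) := ENNReal.toReal_ofReal (by positivity)
  · rw [integral_undef hInt]
    positivity
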